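/- For every n ≥ 2, the two-element set {C_1, C_2} with C_1 = Ω_12 and C_2 = Σ_{i=1}^{n−1} Ω_{i,i+1} generates so(n) as a Lie algebra. -/

import Mathlib

open Matrix

attribute [local instance 100] LieRing.ofAssociativeRing

/-- The standard basis element `Ω i j = E i j - E j i` of `so(n)`. -/
def Omega {n : ℕ} (i j : Fin n) : Matrix (Fin n) (Fin n) ℝ :=
  Matrix.single i j 1 - Matrix.single j i 1

lemma omega_zero {n : ℕ} (i : Fin n) : Omega i i = 0 := sub_self _

lemma omega_anti {n : ℕ} (i j : Fin n) : Omega j i = -Omega i j := by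
  simp [Omega]

lemma E_mul {n : ℕ} (i j k l : Fin n) :
    single i j (1:ℝ) * single k l 1 =
      if j = k then single i l 1 else 0 := by
  split_ifs with h
  · subst h; simp
  · exact single_mul_single_of_ne (c := (1:ℝ)) i j k h 1

lemma omega_bracket {n : ℕ} (i j k l : Fin n) :
    ⁅Omega i j, Omega k l⁆ =
      (if j = k then Omega i l else 0) - (if j = l then Omega i k else 0)
        - (if i = k then Omega j l else 0) + (if i = l then Omega j k else 0) := by
  simp only [Ring.lie_def, Omega, sub_mul, mul_sub, E_mul]
  split_ifs <;> subst_vars <;> simp_all [Omega] <;> abel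

lemma omega_bracket_chain {n : ℕ} {i j k : Fin n} (hij : i ≠ j) (hjk : j ≠ k) (hik : i ≠ k) :
    ⁅Omega i j, Omega j k⁆ = Omega i k := by
  rw [omega_bracket, if_pos rfl, if_neg hjk, if_neg hij, if_neg hik]
  simp

lemma omega_bracket_left {n : ℕ} {i j k : Fin n} (hij : i ≠ j) (hjk : j ≠ k) (hik : i ≠ k) :
    ⁅Omega i j, Omega i k⁆ = -Omega j k := by
  rw [omega_bracket, if_neg (Ne.symm hij), if_neg hjk, if_pos rfl, if_neg hik]
  simp

section
variable {m : ℕ}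

lemma sum_ite_castSucc {M : Type*} [AddCommMonoid M] (f : Fin (m+1) → M) (j : Fin (m+1)) :
    (∑ i : Fin (m+1), if (j.castSucc : Fin (m+2)) = i.castSucc then f i else 0) = f j := by
  simp [Fin.castSucc_inj]

lemma sum_ite_last {M : Type*} [AddCommMonoid M] (f : Fin (m+1) → M) :
    (∑ i : Fin (m+1), if (Fin.last (m+1) : Fin (m+2)) = i.castSucc then f i else 0) = 0 := by
  apply Finset.sum_eq_zero
  intro i _
  rw [if_neg (Fin.castSucc_lt_last i).ne']

lemma sum_ite_succ {M : Type*} [AddCommMonoid M] (f : Fin (m+1) → M) (j : Fin (m+1)) :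
    (∑ i : Fin (m+1), if (j.succ : Fin (m+2)) = i.succ then f i else 0) = f j := by
  simp [Fin.succ_inj]

lemma sum_ite_zero' {M : Type*} [AddCommMonoid M] (f : Fin (m+1) → M) :
    (∑ i : Fin (m+1), if (0 : Fin (m+2)) = i.succ then f i else 0) = 0 := by
  apply Finset.sum_eq_zero
  intro i _
  rw [if_neg (Fin.succ_ne_zero i).symm]

lemma brkC2 (a b : Fin (m+2)) :
    ⁅Omega a b, ∑ i : Fin (m+1), Omega i.castSucc i.succ⁆ =
      (∑ i : Fin (m+1), if b = i.castSucc then Omega a i.succ else 0)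
      - (∑ i : Fin (m+1), if b = i.succ then Omega a i.castSucc else 0)
      - (∑ i : Fin (m+1), if a = i.castSucc then Omega b i.succ else 0)
      + (∑ i : Fin (m+1), if a = i.succ then Omega b i.castSucc else 0) := by
  rw [Ring.lie_def, Finset.mul_sum, Finset.sum_mul, ← Finset.sum_sub_distrib,
    ← Finset.sum_sub_distrib, ← Finset.sum_sub_distrib, ← Finset.sum_add_distrib]
  exact Finset.sum_congr rfl fun i _ => by rw [← Ring.lie_def, omega_bracket]


lemma brkC2_eval (k : ℕ) (h : k + 2 < m + 2) :
    ⁅Omega (⟨k, by omega⟩ : Fin (m+2)) ⟨k+1, by omega⟩,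
        ∑ i : Fin (m+1), Omega i.castSucc i.succ⁆ =
      Omega (⟨k, by omega⟩ : Fin (m+2)) ⟨k+2, h⟩ +
        (if k = 0 then 0 else Omega (⟨k+1, by omega⟩ : Fin (m+2)) ⟨k-1, by omega⟩) := by
  have S1 : (∑ i : Fin (m+1), if (⟨k+1, by omega⟩ : Fin (m+2)) = i.castSucc
      then Omega (⟨k, by omega⟩ : Fin (m+2)) i.succ else 0)
      = Omega (⟨k, by omega⟩ : Fin (m+2)) ⟨k+2, h⟩ := by
    have e1 : (⟨k+1, by omega⟩ : Fin (m+2)) = ((⟨k+1, by omega⟩ : Fin (m+1)).castSucc) := rfl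
    rw [e1, sum_ite_castSucc (fun i => Omega _ i.succ)]
    congr 1
  have S2 : (∑ i : Fin (m+1), if (⟨k+1, by omega⟩ : Fin (m+2)) = i.succ
      then Omega (⟨k, by omega⟩ : Fin (m+2)) i.castSucc else 0) = 0 := by
    have e2 : (⟨k+1, by omega⟩ : Fin (m+2)) = ((⟨k, by omega⟩ : Fin (m+1)).succ) := rfl
    rw [e2, sum_ite_succ (fun i => Omega _ i.castSucc)]
    exact omega_zero _
  have S3 : (∑ i : Fin (m+1), if (⟨k, by omega⟩ : Fin (m+2)) = i.castSucc
      then Omega (⟨k+1, by omega⟩ : Fin (m+2)) i.succ else 0) = 0 := by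
    have e3 : (⟨k, by omega⟩ : Fin (m+2)) = ((⟨k, by omega⟩ : Fin (m+1)).castSucc) := rfl
    rw [e3, sum_ite_castSucc (fun i => Omega _ i.succ)]
    exact omega_zero _
  have S4 : (∑ i : Fin (m+1), if (⟨k, by omega⟩ : Fin (m+2)) = i.succ
      then Omega (⟨k+1, by omega⟩ : Fin (m+2)) i.castSucc else 0)
      = (if k = 0 then 0 else Omega (⟨k+1, by omega⟩ : Fin (m+2)) ⟨k-1, by omega⟩) := by
    rcases Nat.eq_zero_or_pos k with hk | hk
    · subst hk
      have e4 : (⟨0, by omega⟩ : Fin (m+2)) = 0 := rfl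
      rw [e4, sum_ite_zero', if_pos rfl]
    · have e4 : (⟨k, by omega⟩ : Fin (m+2)) = ((⟨k-1, by omega⟩ : Fin (m+1)).succ) := by
        apply Fin.ext; simp; omega
      rw [e4, sum_ite_succ (fun i => Omega _ i.castSucc), if_neg (by omega)]
      congr 1
  rw [brkC2, S1, S2, S3, S4]
  abel

def Sgen (m : ℕ) : LieSubalgebra ℝ (Matrix (Fin (m+2)) (Fin (m+2)) ℝ) :=
  LieSubalgebra.lieSpan ℝ _
    {Omega (0 : Fin (m + 2)) 1, ∑ i : Fin (m + 1), Omega i.castSucc i.succ}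

lemma C2_mem : (∑ i : Fin (m+1), Omega i.castSucc i.succ) ∈ Sgen m :=
  LieSubalgebra.subset_lieSpan (Set.mem_insert_of_mem _ rfl)

lemma gen1_mem : Omega (0 : Fin (m + 2)) 1 ∈ Sgen m :=
  LieSubalgebra.subset_lieSpan (Set.mem_insert _ _)

lemma adj_mem : ∀ (k : ℕ) (h : k + 1 < m + 2),
    Omega (⟨k, by omega⟩ : Fin (m+2)) ⟨k+1, h⟩ ∈ Sgen m := by
  intro k
  induction k using Nat.strong_induction_on with
  | _ k ih =>
    intro h
    cases k with
    | zero =>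
      have e : Omega (⟨0, by omega⟩ : Fin (m+2)) ⟨1, h⟩ = Omega 0 1 := by
        congr 1 <;> (apply Fin.ext; simp)
      rw [e]; exact gen1_mem
    | succ k' =>
      have hA : Omega (⟨k', by omega⟩ : Fin (m+2)) ⟨k'+1, by omega⟩ ∈ Sgen m :=
        ih k' (by omega) (by omega)
      have X := (Sgen m).lie_mem hA C2_mem
      rw [brkC2_eval k' (by omega)] at X
      have hB : Omega (⟨k', by omega⟩ : Fin (m+2)) ⟨k'+2, by omega⟩ ∈ Sgen m := by
        rcases Nat.eq_zero_or_pos k' with hk | hk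
        · subst hk
          rw [if_pos rfl, add_zero] at X
          exact X
        · rw [if_neg (by omega)] at X
          have hD : Omega (⟨k'-1, by omega⟩ : Fin (m+2)) ⟨k', by omega⟩ ∈ Sgen m := by
            have := ih (k'-1) (by omega) (by omega)
            convert this using 2
            apply Fin.ext; simp; omega
          have hF : Omega (⟨k'-1, by omega⟩ : Fin (m+2)) ⟨k'+1, by omega⟩ ∈ Sgen m := by
            have := (Sgen m).lie_mem hD hA
            rwa [omega_bracket_chain (Fin.ne_of_val_ne (by first | (simp; omega) | simp | omega))
              (Fin.ne_of_val_ne (by first | (simp; omega) | simp | omega)) (Fin.ne_of_val_ne (by first | (simp; omega) | simp | omega))] at this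
          have hx := (Sgen m).add_mem X hF
          convert hx using 2
          rw [omega_anti (⟨k'-1, by omega⟩ : Fin (m+2)) ⟨k'+1, by omega⟩]
          abel
      have := (Sgen m).lie_mem hB hA
      rw [omega_bracket_left (Fin.ne_of_val_ne (by simp))
        (Fin.ne_of_val_ne (by first | (simp; omega) | simp | omega)) (Fin.ne_of_val_ne (by first | (simp; omega) | simp | omega))] at this
      rw [← omega_anti] at this
      convert this using 2 <;> (apply Fin.ext; simp)

lemma chain_mem : ∀ (d k : ℕ) (h : k + d + 1 < m + 2),
    Omega (⟨k, by omega⟩ : Fin (m+2)) ⟨k + d + 1, h⟩ ∈ Sgen m := by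
  intro d
  induction d with
  | zero => intro k h; exact adj_mem k h
  | succ d ih =>
    intro k h
    have hA := ih k (by omega)
    have hB := adj_mem (k + d + 1) h
    have := (Sgen m).lie_mem hA hB
    rwa [omega_bracket_chain (Fin.ne_of_val_ne (by first | (simp; omega) | simp | omega))
      (Fin.ne_of_val_ne (by first | (simp; omega) | simp | omega))
      (Fin.ne_of_val_ne (by first | (simp; omega) | simp | omega))] at this

lemma omega_congr {n : ℕ} {a b c d : Fin n} (h1 : a = c) (h2 : b = d) :
    Omega a b = Omega c d := by rw [h1, h2]

lemma omega_mem (a b : Fin (m+2)) : Omega a b ∈ Sgen m := by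
  rcases lt_trichotomy (a : ℕ) (b : ℕ) with h | h | h
  · have key := chain_mem (m := m) ((b : ℕ) - (a : ℕ) - 1) (a : ℕ) (by omega)
    have e : Omega a b = Omega (⟨(a : ℕ), by omega⟩ : Fin (m+2))
        ⟨(a : ℕ) + ((b : ℕ) - (a : ℕ) - 1) + 1, by omega⟩ :=
      omega_congr (Fin.ext (by simp)) (Fin.ext (by simp; omega))
    rw [e]; exact key
  · have : a = b := Fin.ext h
    subst this
    rw [omega_zero]
    exact (Sgen m).zero_mem
  · have key := chain_mem (m := m) ((a : ℕ) - (b : ℕ) - 1) (b : ℕ) (by omega)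
    have e : Omega b a = Omega (⟨(b : ℕ), by omega⟩ : Fin (m+2))
        ⟨(b : ℕ) + ((a : ℕ) - (b : ℕ) - 1) + 1, by omega⟩ :=
      omega_congr (Fin.ext (by simp)) (Fin.ext (by simp; omega))
    rw [omega_anti, e]
    exact neg_mem key

end

def skewAlg (n : ℕ) : LieSubalgebra ℝ (Matrix (Fin n) (Fin n) ℝ) where
  carrier := {A | Aᵀ = -A}
  add_mem' := by
    intro a b ha hb
    simp only [Set.mem_setOf_eq] at *
    rw [Matrix.transpose_add, ha, hb, neg_add]
  zero_mem' := by simp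
  smul_mem' := by
    intro c a ha
    simp only [Set.mem_setOf_eq] at *
    rw [Matrix.transpose_smul, ha, smul_neg]
  lie_mem' := by
    intro a b ha hb
    simp only [Set.mem_setOf_eq] at *
    rw [Ring.lie_def, Matrix.transpose_sub, Matrix.transpose_mul, Matrix.transpose_mul, ha, hb]
    simp only [neg_mul, mul_neg, neg_neg, neg_sub]
    try abel

lemma omega_skew {n : ℕ} (i j : Fin n) : (Omega i j)ᵀ = -Omega i j := by
  unfold Omega
  rw [Matrix.transpose_sub]
  ext a b
  simp [Matrix.single, Matrix.transpose_apply, and_comm]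

lemma skew_decomp {n : ℕ} (A : Matrix (Fin n) (Fin n) ℝ) (h : Aᵀ = -A) :
    A = (2⁻¹ : ℝ) • ∑ i : Fin n, ∑ j : Fin n, A i j • Omega i j := by
  have key : ∑ i : Fin n, ∑ j : Fin n, A i j • Omega i j = A - Aᵀ := by
    unfold Omega
    have h1 : ∑ i : Fin n, ∑ j : Fin n, A i j • single i j (1:ℝ) = A := by
      conv_rhs => rw [matrix_eq_sum_single A]
      simp [smul_single]
    have h2 : ∑ i : Fin n, ∑ j : Fin n, A i j • single j i (1:ℝ) = Aᵀ := by
      conv_rhs => rw [matrix_eq_sum_single Aᵀ]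
      rw [Finset.sum_comm]
      simp [smul_single, Matrix.transpose_apply]
    calc ∑ i : Fin n, ∑ j : Fin n, A i j • (single i j (1:ℝ) - single j i 1)
        = (∑ i : Fin n, ∑ j : Fin n, A i j • single i j (1:ℝ))
          - ∑ i : Fin n, ∑ j : Fin n, A i j • single j i (1:ℝ) := by
          simp [smul_sub, Finset.sum_sub_distrib]
      _ = A - Aᵀ := by rw [h1, h2]
  rw [key, h, sub_neg_eq_add]
  rw [← two_smul ℝ A, smul_smul]
  norm_num

theorem stmt16 (m : ℕ) :
    (LieSubalgebra.lieSpan ℝ (Matrix (Fin (m + 2)) (Fin (m + 2)) ℝ)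
        {Omega (0 : Fin (m + 2)) 1,
          ∑ i : Fin (m + 1), Omega (i.castSucc) (i.succ)} :
      Set (Matrix (Fin (m + 2)) (Fin (m + 2)) ℝ)) =
      {A : Matrix (Fin (m + 2)) (Fin (m + 2)) ℝ | Aᵀ = -A} := by
  ext A
  constructor
  · intro hA
    have hle : Sgen m ≤ skewAlg (m+2) := by
      rw [Sgen, LieSubalgebra.lieSpan_le]
      rintro x (rfl | rfl)
      · exact omega_skew 0 1
      · show (_ : Matrix _ _ ℝ)ᵀ = -_
        rw [Matrix.transpose_sum]
        simp only [omega_skew]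
        rw [← Finset.sum_neg_distrib]
    exact hle hA
  · intro hA
    show A ∈ Sgen m
    rw [skew_decomp A hA]
    exact (Sgen m).smul_mem _ <| (Sgen m).sum_mem fun i _ =>
      (Sgen m).sum_mem fun j _ => (Sgen m).smul_mem _ (omega_mem i j)
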